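/- Let p₁, …, p_H be p-values of H independent hypothesis tests such that under each true null hypothesis the p-value is uniformly distributed on [0,1] (more generally, super-uniform: P(p_i ≤ t) ≤ t). The Benjamini–Hochberg procedure at level α, which rejects the nulls with the k smallest p-values where k = max{ i : p_(i) ≤ iα/H } (p_(i) being the order statistics), controls the false discovery rate: E[V / max(R,1)] ≤ (H₀/H)·α ≤ α, where V is the number of true nulls rejected, R the total number of rejections, and H₀ the number of true nulls. -/

import Mathlib

open MeasureTheory ProbabilityTheory
open scoped NNReal ENNReal

noncomputable def Phi : ℝ → ℝ := fun x => ProbabilityTheory.cdf (gaussianReal 0 1) x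
noncomputable def PhiInv : ℝ → ℝ := Function.invFun Phi

noncomputable def gaussianE (d : ℕ) (x : EuclideanSpace ℝ (Fin d)) (σ : ℝ) :
    Measure (EuclideanSpace ℝ (Fin d)) :=
  (Measure.pi fun i => gaussianReal (x i) (⟨σ ^ 2, sq_nonneg σ⟩ : ℝ≥0)).map
    (MeasurableEquiv.toLp 2 (Fin d → ℝ))

open scoped Classical

/-- The Benjamini–Hochberg threshold index: the largest k ≤ H such that at least k
of the p-values are ≤ kα/H. (This step-up formulation is equivalent to taking
k = max{ i : p_(i) ≤ iα/H } with p_(i) the order statistics.) -/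
noncomputable def bhIndex (H : ℕ) (α : ℝ) (pv : Fin H → ℝ) : ℕ :=
  sSup {k : ℕ | k ≤ H ∧
    k ≤ (Finset.univ.filter (fun i : Fin H => pv i ≤ (k : ℝ) * α / H)).card}

/-- The BH procedure rejects hypothesis i iff its p-value is below (bhIndex)·α/H. -/
noncomputable def bhRejected (H : ℕ) (α : ℝ) (pv : Fin H → ℝ) : Finset (Fin H) :=
  Finset.univ.filter (fun i : Fin H => pv i ≤ (bhIndex H α pv : ℝ) * α / H)

namespace BHAux

def bhSet (H : ℕ) (α : ℝ) (pv : Fin H → ℝ) : Set ℕ :=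
  {k : ℕ | k ≤ H ∧
    k ≤ (Finset.univ.filter (fun i : Fin H => pv i ≤ (k : ℝ) * α / H)).card}

variable {H : ℕ} {α : ℝ}

lemma bhIndex_def (pv : Fin H → ℝ) : bhIndex H α pv = sSup (bhSet H α pv) := rfl

lemma bhSet_nonempty (pv : Fin H → ℝ) : (bhSet H α pv).Nonempty :=
  ⟨0, by simp [bhSet]⟩

lemma bhSet_bdd (pv : Fin H → ℝ) : BddAbove (bhSet H α pv) :=
  ⟨H, fun k hk => hk.1⟩

lemma bhIndex_mem (pv : Fin H → ℝ) : bhIndex H α pv ∈ bhSet H α pv :=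
  Nat.sSup_mem (bhSet_nonempty pv) (bhSet_bdd pv)

lemma le_bhIndex {k : ℕ} {pv : Fin H → ℝ} (hk : k ∈ bhSet H α pv) :
    k ≤ bhIndex H α pv :=
  le_csSup (bhSet_bdd pv) hk

lemma count_mono (pv : Fin H → ℝ) {t t' : ℝ} (h : t ≤ t') :
    (Finset.univ.filter (fun i : Fin H => pv i ≤ t)).card ≤
      (Finset.univ.filter (fun i : Fin H => pv i ≤ t')).card :=
  by
  apply Finset.card_le_card
  intro j hj
  simp only [Finset.mem_filter, Finset.mem_univ, true_and] at *
  exact le_trans hj h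

lemma filter_update_eq {pv : Fin H → ℝ} {i : Fin H} {t : ℝ} (h0 : 0 ≤ t) (hi : pv i ≤ t) :
    Finset.univ.filter (fun j : Fin H => Function.update pv i 0 j ≤ t) =
      Finset.univ.filter (fun j : Fin H => pv j ≤ t) := by
  apply Finset.filter_congr
  intro j _
  rcases eq_or_ne j i with rfl | hj
  · simp [Function.update_self, h0, hi]
  · rw [Function.update_of_ne hj]

lemma card_bhRejected (hH : 0 < H) (hα : 0 < α) (pv : Fin H → ℝ) :
    (bhRejected H α pv).card = bhIndex H α pv := by
  have hmem := bhIndex_mem (α := α) pv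
  apply le_antisymm
  · -- card ≤ bhIndex : card is itself in bhSet
    set m := (bhRejected H α pv).card with hm
    have hmH : m ≤ H := by
      have := Finset.card_filter_le (Finset.univ : Finset (Fin H))
        (fun i : Fin H => pv i ≤ (bhIndex H α pv : ℝ) * α / H)
      rw [hm]; simpa [bhRejected] using this
    have hkm : bhIndex H α pv ≤ m := hmem.2
    have hthr : (bhIndex H α pv : ℝ) * α / H ≤ (m : ℝ) * α / H := by
      have h1 : (bhIndex H α pv : ℝ) * α ≤ (m : ℝ) * α :=
        mul_le_mul_of_nonneg_right (by exact_mod_cast hkm) hα.le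
      exact div_le_div_of_nonneg_right h1 (by exact_mod_cast hH.le)
    have : m ∈ bhSet H α pv := by
      refine ⟨hmH, ?_⟩
      calc m = (Finset.univ.filter (fun i : Fin H =>
              pv i ≤ (bhIndex H α pv : ℝ) * α / H)).card := hm
        _ ≤ _ := count_mono pv hthr
    exact le_bhIndex this
  · exact hmem.2

lemma bhIndex_update (hH : 0 < H) (hα : 0 < α) {pv : Fin H → ℝ} {i : Fin H} {k : ℕ}
    (hpi : pv i ≤ (k : ℝ) * α / H) :
    bhIndex H α pv = k ↔ bhIndex H α (Function.update pv i 0) = k := by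
  have h0 : (0:ℝ) ≤ (k : ℝ) * α / H := by positivity
  have thr_mono : ∀ {a b : ℕ}, a ≤ b → (a : ℝ) * α / H ≤ (b : ℝ) * α / H := by
    intro a b hab
    have h1 : (a : ℝ) * α ≤ (b : ℝ) * α :=
      mul_le_mul_of_nonneg_right (by exact_mod_cast hab) hα.le
    exact div_le_div_of_nonneg_right h1 (by exact_mod_cast hH.le)
  constructor
  · rintro rfl
    obtain ⟨hkH, hkc⟩ := bhIndex_mem (α := α) pv
    have le1 : bhIndex H α pv ≤ bhIndex H α (Function.update pv i 0) := by
      apply le_bhIndex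
      exact ⟨hkH, by rw [filter_update_eq h0 hpi]; exact hkc⟩
    apply le_antisymm ?_ le1
    obtain ⟨hk'H, hk'c⟩ := bhIndex_mem (α := α) (Function.update pv i 0)
    have hpi' : pv i ≤ (bhIndex H α (Function.update pv i 0) : ℝ) * α / H :=
      le_trans hpi (thr_mono le1)
    have h0' : (0:ℝ) ≤ (bhIndex H α (Function.update pv i 0) : ℝ) * α / H := by positivity
    apply le_bhIndex
    exact ⟨hk'H, by rw [← filter_update_eq h0' hpi']; exact hk'c⟩
  · intro hk'
    have hkmem : k ∈ bhSet H α pv := by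
      obtain ⟨h1, h2⟩ := bhIndex_mem (α := α) (Function.update pv i 0)
      rw [hk'] at h1 h2
      exact ⟨h1, by rwa [filter_update_eq h0 hpi] at h2⟩
    have le1 : k ≤ bhIndex H α pv := le_bhIndex hkmem
    apply le_antisymm ?_ le1
    obtain ⟨hk''H, hk''c⟩ := bhIndex_mem (α := α) pv
    have hpi'' : pv i ≤ (bhIndex H α pv : ℝ) * α / H := le_trans hpi (thr_mono le1)
    have h0'' : (0:ℝ) ≤ (bhIndex H α pv : ℝ) * α / H := by positivity
    have hmem2 : bhIndex H α pv ∈ bhSet H α (Function.update pv i 0) :=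
      ⟨hk''H, by rwa [filter_update_eq h0'' hpi'']⟩
    rw [← hk']
    exact le_bhIndex hmem2

end BHAux

namespace BHAux

variable {H : ℕ} {α : ℝ}

lemma measurable_count (c : ℝ) :
    Measurable (fun pv : Fin H → ℝ =>
      (Finset.univ.filter (fun i : Fin H => pv i ≤ c)).card) := by
  simp only [Finset.card_filter]
  apply Finset.measurable_sum
  intro i _
  exact Measurable.ite (measurableSet_le (measurable_pi_apply i) measurable_const)
    measurable_const measurable_const

lemma measurable_mem_bhSet (k : ℕ) :
    MeasurableSet {pv : Fin H → ℝ | k ∈ bhSet H α pv} := by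
  by_cases hk : k ≤ H
  · have heq : {pv : Fin H → ℝ | k ∈ bhSet H α pv} =
        (fun pv : Fin H → ℝ =>
          (Finset.univ.filter (fun i : Fin H => pv i ≤ (k:ℝ)*α/H)).card) ⁻¹' (Set.Ici k) := by
      ext pv; simp [bhSet, hk, Set.mem_Ici]
    rw [heq]
    exact measurable_count _ measurableSet_Ici
  · have heq : {pv : Fin H → ℝ | k ∈ bhSet H α pv} = ∅ := by
      ext pv; simp [bhSet, hk]
    simp [heq]

lemma bhIndex_eq_iff {pv : Fin H → ℝ} {k : ℕ} :
    bhIndex H α pv = k ↔ k ∈ bhSet H α pv ∧ ∀ m, m ∈ bhSet H α pv → m ≤ k := by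
  constructor
  · rintro rfl
    exact ⟨bhIndex_mem pv, fun m hm => le_bhIndex hm⟩
  · rintro ⟨hk, hall⟩
    exact le_antisymm (hall _ (bhIndex_mem pv)) (le_bhIndex hk)

lemma measurable_bhIndex : Measurable (fun pv : Fin H → ℝ => bhIndex H α pv) := by
  apply measurable_to_countable'
  intro k
  have heq : {pv : Fin H → ℝ | bhIndex H α pv = k} =
      {pv : Fin H → ℝ | k ∈ bhSet H α pv} ∩
        ⋂ m : ℕ, ({pv : Fin H → ℝ | m ∈ bhSet H α pv}ᶜ ∪ {pv : Fin H → ℝ | m ≤ k}) := by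
    ext pv
    simp only [Set.mem_setOf_eq, Set.mem_inter_iff, Set.mem_iInter, Set.mem_union,
      Set.mem_compl_iff, bhIndex_eq_iff]
    constructor
    · rintro ⟨hk, hall⟩
      exact ⟨hk, fun m => by by_cases hm : m ∈ bhSet H α pv; exacts [Or.inr (hall m hm), Or.inl hm]⟩
    · rintro ⟨hk, hall⟩
      refine ⟨hk, fun m hm => ?_⟩
      rcases hall m with h | h
      · exact absurd hm h
      · exact h
  show MeasurableSet ((fun pv => bhIndex H α pv) ⁻¹' {k})
  have : (fun pv : Fin H → ℝ => bhIndex H α pv) ⁻¹' {k} =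
      {pv : Fin H → ℝ | bhIndex H α pv = k} := by ext pv; simp
  rw [this, heq]
  apply MeasurableSet.inter (measurable_mem_bhSet k)
  apply MeasurableSet.iInter
  intro m
  apply MeasurableSet.union (measurable_mem_bhSet m).compl
  by_cases hm : m ≤ k
  · simp [hm]
  · simp [hm]

end BHAux

/-- FDR control of the Benjamini–Hochberg procedure for independent, super-uniform
p-values: E[V / max(R,1)] ≤ (H₀/H)·α ≤ α, where V is the number of rejected true
nulls and R the total number of rejections. -/
theorem benjamini_hochberg_fdr_control
    {Ω : Type*} [MeasurableSpace Ω] (μ : Measure Ω) [IsProbabilityMeasure μ]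
    (H : ℕ) (hH : 0 < H) (α : ℝ) (hα : α ∈ Set.Ioo (0:ℝ) 1)
    (p : Fin H → Ω → ℝ) (hmeas : ∀ i, Measurable (p i))
    (hind : ProbabilityTheory.iIndepFun p μ)
    (nulls : Finset (Fin H))
    (hrange : ∀ i ω, p i ω ∈ Set.Icc (0:ℝ) 1)
    (hsuper : ∀ i ∈ nulls, ∀ t ∈ Set.Icc (0:ℝ) 1,
      μ {ω | p i ω ≤ t} ≤ ENNReal.ofReal t) :
    (∫ ω, (((nulls ∩ bhRejected H α (fun i => p i ω)).card : ℝ) /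
        max ((bhRejected H α (fun i => p i ω)).card : ℝ) 1) ∂μ)
      ≤ (nulls.card : ℝ) / H * α ∧ (nulls.card : ℝ) / H * α ≤ α := by
  classical
  obtain ⟨hα0, hα1⟩ := hα
  have hHR : (0:ℝ) < H := by exact_mod_cast hH
  have hcardH : (nulls.card : ℝ) ≤ H := by
    have := Finset.card_le_card (Finset.subset_univ nulls)
    simp only [Finset.card_univ, Fintype.card_fin] at this
    exact_mod_cast this
  have part2 : (nulls.card : ℝ) / H * α ≤ α := by
    have h1 : (nulls.card : ℝ) / H ≤ 1 := by rwa [div_le_one hHR]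
    calc (nulls.card : ℝ) / H * α ≤ 1 * α := mul_le_mul_of_nonneg_right h1 hα0.le
      _ = α := one_mul α
  refine ⟨?_, part2⟩
  have hpvmeas : Measurable (fun ω (i : Fin H) => p i ω) :=
    measurable_pi_lambda _ hmeas
  -- the events
  set A : Fin H → ℕ → Set Ω := fun i k =>
    {ω | bhIndex H α (fun j => p j ω) = k ∧ p i ω ≤ (k : ℝ) * α / H} with hA
  set B : Fin H → ℕ → Set Ω := fun i k =>
    (fun ω => bhIndex H α (Function.update (fun j => p j ω) i 0)) ⁻¹' {k} with hB
  have hAmeas : ∀ i k, MeasurableSet (A i k) := by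
    intro i k
    have heq : A i k =
        ((fun ω => bhIndex H α (fun j => p j ω)) ⁻¹' {k}) ∩
          (p i ⁻¹' Set.Iic ((k : ℝ) * α / H)) := by
      ext ω
      simp [hA, Set.mem_preimage, Set.mem_Iic]
    rw [heq]
    exact ((BHAux.measurable_bhIndex.comp hpvmeas) (measurableSet_singleton k)).inter
      ((hmeas i) measurableSet_Iic)
  have hupdmeas : ∀ i : Fin H,
      Measurable (fun ω => bhIndex H α (Function.update (fun j => p j ω) i 0)) := by
    intro i
    apply BHAux.measurable_bhIndex.comp
    apply measurable_pi_lambda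
    intro j
    rcases eq_or_ne j i with rfl | hj
    · simpa [Function.update_self] using measurable_const
    · simpa [Function.update_of_ne hj] using hmeas j
  have hBmeas : ∀ i k, MeasurableSet (B i k) := fun i k =>
    (hupdmeas i) (measurableSet_singleton k)
  -- pointwise rewrite of the integrand
  have hkey : ∀ ω, ((nulls ∩ bhRejected H α (fun i => p i ω)).card : ℝ) /
        max ((bhRejected H α (fun i => p i ω)).card : ℝ) 1
      = ∑ i ∈ nulls, ∑ k ∈ Finset.Icc 1 H,
          Set.indicator (A i k) (fun _ => (k : ℝ)⁻¹) ω := by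
    intro ω
    have hcard := BHAux.card_bhRejected hH hα0 (fun j => p j ω)
    by_cases hr : bhIndex H α (fun j => p j ω) = 0
    · have hempty : bhRejected H α (fun j => p j ω) = ∅ :=
        Finset.card_eq_zero.mp (by rw [hcard, hr])
      rw [hempty]
      simp only [Finset.inter_empty, Finset.card_empty, Nat.cast_zero, zero_div]
      symm
      apply Finset.sum_eq_zero; intro i _
      apply Finset.sum_eq_zero; intro k hk
      apply Set.indicator_of_notMem
      simp only [hA, Set.mem_setOf_eq, not_and]
      intro h
      exfalso
      rw [hr] at h
      have := (Finset.mem_Icc.mp hk).1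
      omega
    · have hr1 : 1 ≤ bhIndex H α (fun j => p j ω) := Nat.one_le_iff_ne_zero.mpr hr
      have hrH : bhIndex H α (fun j => p j ω) ≤ H :=
        (BHAux.bhIndex_mem (α := α) (fun j => p j ω)).1
      have hmax : max ((bhRejected H α (fun j => p j ω)).card : ℝ) 1
          = (bhIndex H α (fun j => p j ω) : ℝ) := by
        rw [hcard]
        exact max_eq_left (by exact_mod_cast hr1)
      rw [hmax]
      have hinner : ∀ i, ∑ k ∈ Finset.Icc 1 H,
          Set.indicator (A i k) (fun _ => (k : ℝ)⁻¹) ω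
          = if p i ω ≤ (bhIndex H α (fun j => p j ω) : ℝ) * α / H
            then (bhIndex H α (fun j => p j ω) : ℝ)⁻¹ else 0 := by
        intro i
        rw [Finset.sum_eq_single (bhIndex H α (fun j => p j ω))]
        · by_cases hpi : p i ω ≤ (bhIndex H α (fun j => p j ω) : ℝ) * α / H
          · have hmem : ω ∈ A i (bhIndex H α (fun j => p j ω)) := ⟨rfl, hpi⟩
            rw [Set.indicator_of_mem hmem, if_pos hpi]
          · rw [Set.indicator_of_notMem, if_neg hpi]
            simp only [hA, Set.mem_setOf_eq, not_and]
            intro _; exact hpi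
        · intro k _ hkr
          apply Set.indicator_of_notMem
          simp only [hA, Set.mem_setOf_eq, not_and]
          intro h
          exact absurd h.symm hkr
        · intro hrmem
          exact absurd (Finset.mem_Icc.mpr ⟨hr1, hrH⟩) hrmem
      simp only [hinner]
      rw [← Finset.sum_filter]
      rw [Finset.sum_const]
      have hsets : nulls ∩ bhRejected H α (fun j => p j ω)
          = nulls.filter (fun i => p i ω ≤ (bhIndex H α (fun j => p j ω) : ℝ) * α / H) := by
        ext i
        simp [bhRejected, Finset.mem_inter, Finset.mem_filter]
      rw [hsets, nsmul_eq_mul, div_eq_mul_inv]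
    -- done hkey
  have hFint : ∀ (i : Fin H) (k : ℕ),
      Integrable (Set.indicator (A i k) (fun _ => (k : ℝ)⁻¹)) μ :=
    fun i k => (integrable_const _).indicator (hAmeas i k)
  have hint : (∫ ω, (((nulls ∩ bhRejected H α (fun i => p i ω)).card : ℝ) /
        max ((bhRejected H α (fun i => p i ω)).card : ℝ) 1) ∂μ)
      = ∑ i ∈ nulls, ∑ k ∈ Finset.Icc 1 H, (μ (A i k)).toReal * (k : ℝ)⁻¹ := by
    rw [show (fun ω => (((nulls ∩ bhRejected H α (fun i => p i ω)).card : ℝ) /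
        max ((bhRejected H α (fun i => p i ω)).card : ℝ) 1))
      = (fun ω => ∑ i ∈ nulls, ∑ k ∈ Finset.Icc 1 H,
          Set.indicator (A i k) (fun _ => (k : ℝ)⁻¹) ω) from funext hkey]
    rw [integral_finset_sum _ (fun i _ => integrable_finset_sum _ (fun k _ => hFint i k))]
    congr 1
    funext i
    rw [integral_finset_sum _ (fun k _ => hFint i k)]
    congr 1
    funext k
    rw [integral_indicator (hAmeas i k), setIntegral_const, smul_eq_mul]; rfl
  -- leave-one-out identity
  have hswap : ∀ (i : Fin H) (k : ℕ),
      A i k = (p i ⁻¹' Set.Iic ((k : ℝ) * α / H)) ∩ B i k := by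
    intro i k
    ext ω
    simp only [hA, hB, Set.mem_setOf_eq, Set.mem_inter_iff, Set.mem_preimage, Set.mem_Iic,
      Set.mem_singleton_iff]
    constructor
    · rintro ⟨h1, h2⟩
      exact ⟨h2, (BHAux.bhIndex_update hH hα0 h2).mp h1⟩
    · rintro ⟨h2, h1⟩
      exact ⟨(BHAux.bhIndex_update hH hα0 h2).mpr h1, h2⟩
  -- independence
  have hindep : ∀ i : Fin H,
      IndepFun (p i) (fun ω => bhIndex H α (Function.update (fun j => p j ω) i 0)) μ := by
    intro i
    have hdisj : Disjoint ({i} : Finset (Fin H)) ({i}ᶜ) := disjoint_compl_right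
    have base := hind.indepFun_finset {i} ({i}ᶜ) hdisj hmeas
    have h1 : Measurable (fun v : (({i} : Finset (Fin H)) : Type) → ℝ =>
        v ⟨i, Finset.mem_singleton_self i⟩) := measurable_pi_apply _
    have hGmeas : Measurable (fun v : ((({i}ᶜ : Finset (Fin H))) : Type) → ℝ =>
        bhIndex H α (fun j => if h : j ∈ ({i}ᶜ : Finset (Fin H)) then v ⟨j, h⟩ else 0)) := by
      apply BHAux.measurable_bhIndex.comp
      apply measurable_pi_lambda
      intro j
      by_cases h : j ∈ ({i}ᶜ : Finset (Fin H))
      · simpa [h] using measurable_pi_apply (⟨j, h⟩ : (({i}ᶜ : Finset (Fin H)) : Type))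
      · simpa [h] using measurable_const
    have hcomp := base.comp h1 hGmeas
    have e1 : ((fun v : (({i} : Finset (Fin H)) : Type) → ℝ =>
        v ⟨i, Finset.mem_singleton_self i⟩) ∘ (fun ω (j : ({i} : Finset (Fin H))) => p j ω))
        = p i := rfl
    have e2 : ((fun v : ((({i}ᶜ : Finset (Fin H))) : Type) → ℝ =>
          bhIndex H α (fun j => if h : j ∈ ({i}ᶜ : Finset (Fin H)) then v ⟨j, h⟩ else 0)) ∘
          (fun ω (j : (({i}ᶜ : Finset (Fin H)) : Type)) => p j ω))
        = (fun ω => bhIndex H α (Function.update (fun j => p j ω) i 0)) := by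
      funext ω
      simp only [Function.comp_apply]
      congr 1
      funext j
      rcases eq_or_ne j i with rfl | hj
      · simp [Function.update_self]
      · have hjm : j ∈ ({i}ᶜ : Finset (Fin H)) := by simp [hj]
        simp [hjm, Function.update_of_ne hj]
    rw [e1, e2] at hcomp
    exact hcomp
  have hprod : ∀ (i : Fin H) (k : ℕ),
      μ (A i k) = μ (p i ⁻¹' Set.Iic ((k : ℝ) * α / H)) * μ (B i k) := by
    intro i k
    rw [hswap i k]
    exact (hindep i).measure_inter_preimage_eq_mul _ _ measurableSet_Iic
      (measurableSet_singleton k)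
  -- super-uniform bound
  have hPi : ∀ i ∈ nulls, ∀ k ∈ Finset.Icc 1 H,
      (μ (p i ⁻¹' Set.Iic ((k : ℝ) * α / H))).toReal ≤ (k : ℝ) * α / H := by
    intro i hi k hk
    have hkH : (k : ℝ) ≤ H := by exact_mod_cast (Finset.mem_Icc.mp hk).2
    have ht1 : (k : ℝ) * α / H ≤ 1 := by
      have h1 : (k : ℝ) * α ≤ (H : ℝ) * α := mul_le_mul_of_nonneg_right hkH hα0.le
      have h2 : (k : ℝ) * α / H ≤ (H : ℝ) * α / H := div_le_div_of_nonneg_right h1 hHR.le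
      calc (k : ℝ) * α / H ≤ (H : ℝ) * α / H := h2
        _ = α := by field_simp
        _ ≤ 1 := hα1.le
    have ht0 : (0:ℝ) ≤ (k : ℝ) * α / H := by positivity
    have hs := hsuper i hi _ ⟨ht0, ht1⟩
    calc (μ (p i ⁻¹' Set.Iic ((k : ℝ) * α / H))).toReal
        ≤ (ENNReal.ofReal ((k : ℝ) * α / H)).toReal :=
          ENNReal.toReal_mono ENNReal.ofReal_ne_top hs
      _ = (k : ℝ) * α / H := ENNReal.toReal_ofReal ht0
  -- sum of B-probabilities is at most 1
  have hsumB : ∀ i : Fin H, ∑ k ∈ Finset.Icc 1 H, (μ (B i k)).toReal ≤ 1 := by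
    intro i
    have hle : ∑ k ∈ Finset.Icc 1 H, μ (B i k) ≤ 1 := by
      rw [← measure_biUnion_finset ?_ (fun k _ => hBmeas i k)]
      · exact prob_le_one
      · intro a _ b _ hab
        simp only [Function.onFun, hB, Set.disjoint_left, Set.mem_preimage,
          Set.mem_singleton_iff]
        intro ω h1 h2
        exact hab (h1 ▸ h2 ▸ rfl)
    have := ENNReal.toReal_mono (by simp) hle
    rwa [ENNReal.toReal_sum (fun k _ => measure_ne_top μ _), ENNReal.toReal_one] at this
  -- final chain
  rw [hint]
  have hterm : ∀ i ∈ nulls, ∀ k ∈ Finset.Icc 1 H,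
      (μ (A i k)).toReal * (k : ℝ)⁻¹ ≤ α / H * (μ (B i k)).toReal := by
    intro i hi k hk
    have hk1 : 1 ≤ k := (Finset.mem_Icc.mp hk).1
    have hkR : (0:ℝ) < k := by exact_mod_cast hk1
    rw [hprod i k, ENNReal.toReal_mul]
    have h1 : (μ (p i ⁻¹' Set.Iic ((k : ℝ) * α / H))).toReal * (μ (B i k)).toReal * (k : ℝ)⁻¹
        ≤ ((k : ℝ) * α / H) * (μ (B i k)).toReal * (k : ℝ)⁻¹ := by
      have := hPi i hi k hk
      have h0B : (0:ℝ) ≤ (μ (B i k)).toReal := ENNReal.toReal_nonneg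
      have h0k : (0:ℝ) ≤ (k : ℝ)⁻¹ := by positivity
      exact mul_le_mul_of_nonneg_right (mul_le_mul_of_nonneg_right this h0B) h0k
    calc (μ (p i ⁻¹' Set.Iic ((k : ℝ) * α / H))).toReal * (μ (B i k)).toReal * (k : ℝ)⁻¹
        ≤ ((k : ℝ) * α / H) * (μ (B i k)).toReal * (k : ℝ)⁻¹ := h1
      _ = α / H * (μ (B i k)).toReal := by field_simp
  calc ∑ i ∈ nulls, ∑ k ∈ Finset.Icc 1 H, (μ (A i k)).toReal * (k : ℝ)⁻¹
      ≤ ∑ i ∈ nulls, ∑ k ∈ Finset.Icc 1 H, α / H * (μ (B i k)).toReal := by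
        apply Finset.sum_le_sum
        intro i hi
        exact Finset.sum_le_sum (hterm i hi)
    _ = ∑ i ∈ nulls, α / H * ∑ k ∈ Finset.Icc 1 H, (μ (B i k)).toReal := by
        simp [Finset.mul_sum]
    _ ≤ ∑ i ∈ nulls, α / H * 1 := by
        apply Finset.sum_le_sum
        intro i _
        exact mul_le_mul_of_nonneg_left (hsumB i) (by positivity)
    _ = (nulls.card : ℝ) * (α / H) := by
        rw [Finset.sum_const, nsmul_eq_mul, mul_one]
    _ = (nulls.card : ℝ) / H * α := by ring
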